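/- If H is a graph with at least one edge, then tree-χ(C(H)) = tree-χ(H), where C(H) is the 1-completion of H. -/

import Mathlib

open SimpleGraph

structure TreeDecomp {V : Type} (G : SimpleGraph V) where
  ι : Type
  tree : SimpleGraph ι
  isTree : tree.IsTree
  bag : ι → Finset V
  covers_edge : ∀ ⦃u v : V⦄, G.Adj u v → ∃ t, u ∈ bag t ∧ v ∈ bag t
  support_connected : ∀ v : V, (tree.induce {t | v ∈ bag t}).Connected

noncomputable def indepNum {V : Type} (G : SimpleGraph V) (s : Set V) : ℕ :=
  sSup {n | ∃ t : Finset V, ↑t ⊆ s ∧ (↑t : Set V).Pairwise (fun a b => ¬ G.Adj a b) ∧ t.card = n}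

noncomputable def alpha {V : Type} (G : SimpleGraph V) : ℕ := indepNum G Set.univ

noncomputable def chiNat {V : Type} (G : SimpleGraph V) : ℕ := G.chromaticNumber.toNat

noncomputable def tw {V : Type} (G : SimpleGraph V) : ℕ :=
  sInf {w | ∃ D : TreeDecomp G, ∀ t, (D.bag t).card ≤ w + 1}

noncomputable def treeAlpha {V : Type} (G : SimpleGraph V) : ℕ :=
  sInf {k | ∃ D : TreeDecomp G, ∀ t, indepNum G ↑(D.bag t) ≤ k}

noncomputable def treeChi {V : Type} (G : SimpleGraph V) : ℕ :=
  sInf {k | ∃ D : TreeDecomp G, ∀ t, chiNat (G.induce ↑(D.bag t)) ≤ k}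

noncomputable def treeTw {V : Type} (G : SimpleGraph V) : ℕ :=
  sInf {k | ∃ D : TreeDecomp G, ∀ t, tw (G.induce ↑(D.bag t)) ≤ k}

noncomputable def omegaNum {V : Type} (G : SimpleGraph V) : ℕ :=
  sSup {n | ∃ t : Finset V, G.IsClique ↑t ∧ t.card = n}

def completion {V : Type} (H : SimpleGraph V) :
    SimpleGraph (V ⊕ {p : Sym2 V // ¬ p.IsDiag ∧ p ∉ H.edgeSet}) :=
  SimpleGraph.fromRel (fun x y =>
    match x, y with
    | .inl u, .inl v => H.Adj u v
    | .inl u, .inr p => u ∈ p.1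
    | _, _ => False)


section helpers
lemma colorable_of_chiNat_le {W : Type} [Finite W] (G : SimpleGraph W) {k : ℕ}
    (h : chiNat G ≤ k) : G.Colorable k := by
  haveI : Fintype W := Fintype.ofFinite W
  rw [← chromaticNumber_le_iff_colorable]
  have hne : G.chromaticNumber ≠ ⊤ :=
    chromaticNumber_ne_top_iff_exists.2 ⟨_, G.colorable_of_fintype⟩
  rw [← ENat.coe_toNat_eq_self.2 hne, Nat.cast_le]
  exact h

lemma chiNat_le_of_colorable {W : Type} (G : SimpleGraph W) {k : ℕ}
    (h : G.Colorable k) : chiNat G ≤ k := by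
  have := h.chromaticNumber_le
  have h2 : G.chromaticNumber.toNat ≤ (k : ℕ∞).toNat := ENat.toNat_le_toNat this (by simp)
  simpa [chiNat] using h2
variable {V : Type} {H : SimpleGraph V}

lemma completion_adj_inl_inl {u v : V} :
    (completion H).Adj (.inl u) (.inl v) ↔ H.Adj u v := by
  simp only [completion, fromRel_adj]
  constructor
  · rintro ⟨hne, h | h⟩
    · exact h
    · exact h.symm
  · intro h
    exact ⟨by simp [h.ne], Or.inl h⟩

lemma completion_adj_inl_inr {u : V} {p} :
    (completion H).Adj (.inl u) (.inr p) ↔ u ∈ p.1 := by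
  simp only [completion, fromRel_adj]
  constructor
  · rintro ⟨-, h | h⟩
    · exact h
    · exact h.elim
  · intro h
    exact ⟨by simp, Or.inl h⟩

lemma completion_adj_inr_inl {u : V} {p} :
    (completion H).Adj (.inr p) (.inl u) ↔ u ∈ p.1 := by
  rw [adj_comm]; exact completion_adj_inl_inr

lemma completion_adj_inr_inr {p q} :
    ¬ (completion H).Adj (.inr p) (.inr q) := by
  simp only [completion, fromRel_adj]
  rintro ⟨-, h | h⟩ <;> exact h
end helpers

section ext

variable {ι σ : Type}

def extendTree (T : SimpleGraph ι) (anchor : σ → ι) : SimpleGraph (ι ⊕ σ) where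
  Adj a b := match a, b with
    | .inl s, .inl t => T.Adj s t
    | .inl s, .inr p => anchor p = s
    | .inr p, .inl s => anchor p = s
    | .inr _, .inr _ => False
  symm := by
    constructor
    rintro (s | p) (t | q) h
    · exact h.symm
    · exact h
    · exact h
    · exact h
  loopless := by
    constructor
    rintro (s | p) h
    · exact T.loopless.irrefl s h
    · exact h

variable {T : SimpleGraph ι} {anchor : σ → ι}

@[simp] lemma extendTree_adj_inl_inl {s t : ι} :
    (extendTree T anchor).Adj (.inl s) (.inl t) ↔ T.Adj s t := Iff.rfl

@[simp] lemma extendTree_adj_inl_inr {s : ι} {p : σ} :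
    (extendTree T anchor).Adj (.inl s) (.inr p) ↔ anchor p = s := Iff.rfl

@[simp] lemma extendTree_adj_inr_inl {s : ι} {p : σ} :
    (extendTree T anchor).Adj (.inr p) (.inl s) ↔ anchor p = s := Iff.rfl

@[simp] lemma extendTree_adj_inr_inr {p q : σ} :
    ¬ (extendTree T anchor).Adj (.inr p) (.inr q) := fun h => h

def inlHom (T : SimpleGraph ι) (anchor : σ → ι) : T →g extendTree T anchor where
  toFun := Sum.inl
  map_rel' := fun h => h

lemma extendTree_preconnected (hT : T.Connected) :
    (extendTree T anchor).Preconnected := by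
  have hl : ∀ s t : ι, (extendTree T anchor).Reachable (.inl s) (.inl t) := by
    intro s t
    exact (hT.preconnected s t).map (inlHom T anchor)
  have hr : ∀ p : σ, (extendTree T anchor).Reachable (.inr p) (.inl (anchor p)) := by
    intro p
    exact Adj.reachable (by simp)
  rintro (s | p) (t | q)
  · exact hl s t
  · exact (hl s (anchor q)).trans (hr q).symm
  · exact (hr p).trans (hl _ t)
  · exact (hr p).trans ((hl _ _).trans (hr q).symm)

lemma extendTree_lift {x y : ι ⊕ σ} (w : (extendTree T anchor).Walk x y)
    (h : ∀ z ∈ w.support, z.isLeft) :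
    ∃ (a b : ι) (ha : x = .inl a) (hb : y = .inl b) (p : T.Walk a b),
      w = (p.map (inlHom T anchor)).copy ha.symm hb.symm := by
  induction w with
  | nil =>
      rename_i z
      obtain ⟨a, rfl⟩ := Sum.isLeft_iff.1 (h z (Walk.start_mem_support _))
      exact ⟨a, a, rfl, rfl, .nil, by rfl⟩
  | cons hadj w ih =>
      rename_i x' z y'
      obtain ⟨a, b, rfl, rfl, p, rfl⟩ := ih (fun u hu => h u (by simp [hu]))
      obtain ⟨a0, rfl⟩ := Sum.isLeft_iff.1 (h x' (Walk.start_mem_support _))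
      have hadj' : T.Adj a0 a := hadj
      exact ⟨a0, b, rfl, rfl, .cons hadj' p, by rfl⟩

lemma extendTree_no_cycle_at_inr (q : σ) (c : (extendTree T anchor).Walk (.inr q) (.inr q)) :
    ¬ c.IsCycle := by
  intro hc
  cases c with
  | nil => exact hc.not_of_nil
  | cons hadj r =>
      rename_i z
      obtain ⟨A, rfl⟩ : ∃ A, z = Sum.inl A := by
        cases z with
        | inl A => exact ⟨A, rfl⟩
        | inr p => exact absurd hadj (extendTree_adj_inr_inr)
      have hA : anchor q = A := hadj
      obtain ⟨x, q0, h', hcc⟩ := Walk.exists_cons_eq_concat hadj r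
      obtain ⟨B, rfl⟩ : ∃ B, x = Sum.inl B := by
        cases x with
        | inl B => exact ⟨B, rfl⟩
        | inr p => exact absurd h'.symm (extendTree_adj_inr_inr)
      have hB : anchor q = B := h'.symm
      -- edges equality
      have hedges : s(Sum.inr q, Sum.inl A) :: r.edges
          = q0.edges ++ [s(Sum.inl B, Sum.inr q)] := by
        have := congrArg Walk.edges hcc
        simpa [Walk.edges_concat] using this
      have hq0ne : q0.edges ≠ [] := by
        intro hnil
        have h3 := hc.three_le_length
        have hlen := congrArg Walk.length hcc
        rw [Walk.length_concat, Walk.length_cons] at hlen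
        have hq0 : q0.length = 0 := by
          simpa [Walk.length_edges] using congrArg List.length hnil
        rw [Walk.length_cons] at h3
        omega
      obtain ⟨e0, t, ht⟩ := List.exists_cons_of_ne_nil hq0ne
      rw [ht] at hedges
      simp only [List.cons_append, List.cons.injEq] at hedges
      have hmem : s(Sum.inr q, Sum.inl A) ∈ r.edges := by
        rw [hedges.2]
        have : s((Sum.inl B : ι ⊕ σ), Sum.inr q) = s((Sum.inr q : ι ⊕ σ), Sum.inl A) := by
          rw [Sym2.eq_swap]
          rw [← hA, ← hB]
        rw [← this]
        simp
      have hnodup := hc.isTrail.edges_nodup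
      simp only [Walk.edges_cons, List.nodup_cons] at hnodup
      exact hnodup.1 hmem

lemma extendTree_isAcyclic (hT : T.IsAcyclic) : (extendTree T anchor).IsAcyclic := by
  classical
  intro x c hc
  obtain hL | hL := Classical.em (∀ z ∈ c.support, z.isLeft)
  · obtain ⟨a, b, rfl, hb, p, rfl⟩ := extendTree_lift c hL
    obtain rfl : a = b := by exact Sum.inl_injective hb
    change (p.map (inlHom T anchor)).IsCycle at hc
    rw [Walk.map_isCycle_iff_of_injective Sum.inl_injective] at hc
    exact hT p hc
  · push_neg at hL
    obtain ⟨z, hz, hzl⟩ := hL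
    obtain ⟨q, rfl⟩ : ∃ q, z = Sum.inr q := by
      cases z with
      | inl a => simp at hzl
      | inr q => exact ⟨q, rfl⟩
    exact extendTree_no_cycle_at_inr q _ (hc.rotate hz)

lemma extendTree_isTree (hT : T.IsTree) : (extendTree T anchor).IsTree := by
  haveI := hT.isConnected.nonempty
  haveI : Nonempty (ι ⊕ σ) := ⟨.inl (Classical.arbitrary ι)⟩
  exact ⟨⟨extendTree_preconnected hT.isConnected⟩, extendTree_isAcyclic hT.IsAcyclic⟩
end ext

section conn

variable {W : Type} {G : SimpleGraph W}

lemma induce_singleton_connected (v : W) : (G.induce {v}).Connected := by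
  haveI : Nonempty ({v} : Set W) := ⟨⟨v, rfl⟩⟩
  refine ⟨fun a b => ?_⟩
  have : a = b := Subtype.ext (by
    have ha := a.2
    have hb := b.2
    simp only [Set.mem_singleton_iff] at ha hb
    rw [ha, hb])
  rw [this]

lemma induce_attach_connected {S T : Set W} (hS : (G.induce S).Connected)
    (hT : ∀ x ∈ T, x ∉ S → ∃ s ∈ S, G.Adj x s) :
    (G.induce (S ∪ T)).Connected := by
  obtain ⟨u, hu⟩ : S.Nonempty := by
    have := hS.nonempty
    obtain ⟨⟨u, hu⟩⟩ := this
    exact ⟨u, hu⟩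
  apply induce_connected_of_patches u (Or.inl hu)
  intro v hv
  rcases Classical.em (v ∈ S) with hvS | hvS
  · exact ⟨S, Set.subset_union_left, hu, hvS, hS.preconnected ⟨u, hu⟩ ⟨v, hvS⟩⟩
  · obtain ⟨s, hs, hadj⟩ := hT v (hv.resolve_left hvS) hvS
    have hconn : (G.induce (S ∪ {v})).Connected :=
      connected_induce_union hS.preconnected (induce_singleton_connected v).preconnected hs rfl hadj.symm
    exact ⟨S ∪ {v}, by
        intro z hz
        rcases hz with hz | hz
        · exact Or.inl hz
        · rw [hz]; exact hv,
      Or.inl hu, Or.inr rfl, hconn.preconnected _ _⟩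

lemma colorable_of_hom {W' : Type} {G' : SimpleGraph W'} (f : G →g G') {n : ℕ}
    (h : G'.Colorable n) : G.Colorable n := by
  obtain ⟨C⟩ := h
  exact ⟨(C : G' →g _).comp f⟩
end conn


section isos

lemma extendTree_induce_image_connected {ι σ : Type} {T : SimpleGraph ι} {anchor : σ → ι}
    {S : Set ι} (h : (T.induce S).Connected) :
    ((extendTree T anchor).induce (Sum.inl '' S)).Connected := by
  have e : T.induce S ≃g (extendTree T anchor).induce (Sum.inl '' S) :=
    { toEquiv := Equiv.Set.image Sum.inl S Sum.inl_injective
      map_rel_iff' := Iff.rfl }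
  exact e.connected_iff.1 h

lemma completion_induce_image_colorable {V : Type} {H : SimpleGraph V} {s : Set V} {n : ℕ}
    (h : (H.induce s).Colorable n) :
    (((completion H).induce (Sum.inl '' s)).Colorable n) := by
  have e : H.induce s ≃g (completion H).induce (Sum.inl '' s) :=
    { toEquiv := Equiv.Set.image Sum.inl s Sum.inl_injective
      map_rel_iff' := by
        intro a b
        exact completion_adj_inl_inl }
  exact colorable_of_hom e.symm.toHom h

end isos

section coloringlemma

lemma fin_add_one_ne {m : ℕ} (a : Fin (m+1+1)) : a + 1 ≠ a := by
  intro h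
  have h' : a + 1 = a + 0 := by rw [add_zero]; exact h
  have h1 : (1 : Fin (m+1+1)) = 0 := add_left_cancel h'
  have := congrArg Fin.val h1
  simp [Fin.val_one] at this

lemma colorable_union_indep {W : Type} (G : SimpleGraph W) (A X : Set W) (n : ℕ) (hn : 2 ≤ n)
    (hA : (G.induce A).Colorable n)
    (hX : ∀ x ∈ X, ∀ y ∈ X, ¬G.Adj x y)
    (hdeg : ∀ x ∈ X, x ∉ A → ∃ y, ∀ z ∈ A, G.Adj x z → z = y) :
    (G.induce (A ∪ X)).Colorable n := by
  classical
  obtain ⟨m, rfl⟩ : ∃ m, n = m + 1 + 1 := ⟨n - 2, by omega⟩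
  obtain ⟨c⟩ := hA
  set f : (↑(A ∪ X) : Set W) → Fin (m+1+1) := fun w =>
    if h : (w : W) ∈ A then c ⟨w, h⟩
    else if hy : ∃ z, z ∈ A ∧ G.Adj (w : W) z then c ⟨hy.choose, hy.choose_spec.1⟩ + 1
    else 0 with hf
  have key : ∀ (v w : (↑(A ∪ X) : Set W)), G.Adj (v : W) (w : W) → (v : W) ∈ A →
      (w : W) ∉ A → f v ≠ f w := by
    intro v w hG hv hw
    have hx : (w : W) ∈ X := (w.2).resolve_left hw
    have hy : ∃ z, z ∈ A ∧ G.Adj (w : W) z := ⟨v, hv, hG.symm⟩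
    have hfw : f w = c ⟨hy.choose, hy.choose_spec.1⟩ + 1 := by
      rw [hf]; simp only [hw, dif_neg, not_false_iff, hy, dif_pos]
    have hfv : f v = c ⟨v, hv⟩ := by rw [hf]; simp only [hv, dif_pos]
    obtain ⟨y, hyspec⟩ := hdeg (w : W) hx hw
    have h1 : hy.choose = y := hyspec _ hy.choose_spec.1 hy.choose_spec.2
    have h2 : (v : W) = y := hyspec _ hv hG.symm
    have h3 : (⟨hy.choose, hy.choose_spec.1⟩ : A) = ⟨v, hv⟩ := Subtype.ext (h1.trans h2.symm)
    rw [hfv, hfw, h3]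
    exact fun h => fin_add_one_ne (c ⟨v, hv⟩) h.symm
  refine ⟨Coloring.mk f ?_⟩
  intro v w hadj
  have hG : G.Adj (v : W) (w : W) := hadj
  by_cases hv : (v : W) ∈ A <;> by_cases hw : (w : W) ∈ A
  · have hfv : f v = c ⟨v, hv⟩ := by rw [hf]; simp only [hv, dif_pos]
    have hfw : f w = c ⟨w, hw⟩ := by rw [hf]; simp only [hw, dif_pos]
    rw [hfv, hfw]
    exact c.valid hG
  · exact key v w hG hv hw
  · exact fun h => key w v hG.symm hw hv h.symm
  · exact absurd hG (hX _ ((v.2).resolve_left hv) _ ((w.2).resolve_left hw))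

end coloringlemma


section construction

abbrev QQ {V : Type} (H : SimpleGraph V) : Type := {p : Sym2 V // ¬ p.IsDiag ∧ p ∉ H.edgeSet}

def newBagSet {V : Type} {H : SimpleGraph V} (D : TreeDecomp H)
    (uu vv : QQ H → V) (S : QQ H → Set D.ι) : D.ι ⊕ QQ H → Set (V ⊕ QQ H)
  | .inl t => {y | match y with
      | .inl w => w ∈ D.bag t
      | .inr p => t ∈ S p}
  | .inr q => {y | match y with
      | .inl w => w = uu q ∨ (S q = ∅ ∧ w = vv q)
      | .inr p => p = q}

variable {V : Type} {H : SimpleGraph V} {D : TreeDecomp H}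
  {uu vv : QQ H → V} {S : QQ H → Set D.ι}

@[simp] lemma mem_newBagSet_inl_inl {w : V} {t : D.ι} :
    (Sum.inl w ∈ newBagSet D uu vv S (.inl t)) ↔ w ∈ D.bag t := Iff.rfl

@[simp] lemma mem_newBagSet_inl_inr {p : QQ H} {t : D.ι} :
    (Sum.inr p ∈ newBagSet D uu vv S (.inl t)) ↔ t ∈ S p := Iff.rfl

@[simp] lemma mem_newBagSet_inr_inl {w : V} {q : QQ H} :
    (Sum.inl w ∈ newBagSet D uu vv S (.inr q)) ↔ (w = uu q ∨ (S q = ∅ ∧ w = vv q)) := Iff.rfl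

@[simp] lemma mem_newBagSet_inr_inr {p q : QQ H} :
    (Sum.inr p ∈ newBagSet D uu vv S (.inr q)) ↔ p = q := Iff.rfl

end construction

lemma construct {V : Type} [Fintype V] {H : SimpleGraph V} (D : TreeDecomp H) {k : ℕ}
    (hk : 2 ≤ k) (hD : ∀ t, chiNat (H.induce ↑(D.bag t)) ≤ k) :
    ∃ D' : TreeDecomp (completion H), ∀ t, chiNat ((completion H).induce ↑(D'.bag t)) ≤ k := by
  classical
  have hrep : ∀ p : QQ H, ∃ z : V × V, p.1 = s(z.1, z.2) :=
    fun p => Sym2.ind (fun x y => ⟨(x, y), rfl⟩) p.1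
  choose rep hrep using hrep
  set uu : QQ H → V := fun p => (rep p).1 with huu
  set vv : QQ H → V := fun p => (rep p).2 with hvv
  have hnadj : ∀ p : QQ H, ¬ H.Adj (uu p) (vv p) := by
    intro p h
    exact p.2.2 (by rw [hrep p]; exact H.mem_edgeSet.2 h)
  have main : ∀ p : QQ H, ∃ (a : D.ι) (T : Set D.ι),
      (uu p) ∈ D.bag a ∧
      ((T = ∅ ∧ (vv p) ∈ D.bag a) ∨
        (a ∈ T ∧ (D.tree.induce T).Connected ∧ (∃ m ∈ T, (vv p) ∈ D.bag m) ∧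
          ∀ m ∈ T, ¬((uu p) ∈ D.bag m ∧ (vv p) ∈ D.bag m))) := by
    intro p
    by_cases hcom : ∃ t, uu p ∈ D.bag t ∧ vv p ∈ D.bag t
    · obtain ⟨t, h1, h2⟩ := hcom
      exact ⟨t, ∅, h1, Or.inl ⟨rfl, h2⟩⟩
    · obtain ⟨⟨a, ha⟩⟩ := (D.support_connected (uu p)).nonempty
      obtain ⟨⟨b, hb⟩⟩ := (D.support_connected (vv p)).nonempty
      obtain ⟨w⟩ := D.isTree.isConnected.preconnected a b
      refine ⟨a, {m | m ∈ w.support}, ha,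
        Or.inr ⟨w.start_mem_support, ?_, ⟨b, w.end_mem_support, hb⟩, ?_⟩⟩
      · exact w.connected_induce_support
      · rintro m _ ⟨h1, h2⟩
        exact hcom ⟨m, h1, h2⟩
  choose anchor S huA hspec using main
  have hmem : ∀ (i : D.ι ⊕ QQ H) (y : V ⊕ QQ H),
      y ∈ (Set.toFinite (newBagSet D uu vv S i)).toFinset ↔ y ∈ newBagSet D uu vv S i :=
    fun i y => Set.Finite.mem_toFinset _
  refine ⟨⟨D.ι ⊕ QQ H, extendTree D.tree anchor, extendTree_isTree D.isTree,
      fun i => (Set.toFinite (newBagSet D uu vv S i)).toFinset, ?_, ?_⟩, ?_⟩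
  · -- covers_edge
    rintro (w1 | p1) (w2 | p2) hadj
    · obtain ⟨t, h1, h2⟩ := D.covers_edge (completion_adj_inl_inl.1 hadj)
      exact ⟨.inl t, (hmem _ _).2 h1, (hmem _ _).2 h2⟩
    · have hm : w1 ∈ (p2 : QQ H).1 := completion_adj_inl_inr.1 hadj
      rw [hrep p2, Sym2.mem_iff] at hm
      rcases hm with hm | hm
      · exact ⟨.inr p2, (hmem _ _).2 (Or.inl hm), (hmem _ _).2 rfl⟩
      · rcases hspec p2 with ⟨hS, hv⟩ | ⟨_, _, ⟨m, hmS, hvm⟩, _⟩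
        · exact ⟨.inr p2, (hmem _ _).2 (Or.inr ⟨hS, hm⟩), (hmem _ _).2 rfl⟩
        · refine ⟨.inl m, (hmem _ _).2 ?_, (hmem _ _).2 hmS⟩
          show w1 ∈ D.bag m
          rw [hm]; exact hvm
    · have hm : w2 ∈ (p1 : QQ H).1 := completion_adj_inr_inl.1 hadj
      rw [hrep p1, Sym2.mem_iff] at hm
      rcases hm with hm | hm
      · exact ⟨.inr p1, (hmem _ _).2 rfl, (hmem _ _).2 (Or.inl hm)⟩
      · rcases hspec p1 with ⟨hS, hv⟩ | ⟨_, _, ⟨m, hmS, hvm⟩, _⟩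
        · exact ⟨.inr p1, (hmem _ _).2 rfl, (hmem _ _).2 (Or.inr ⟨hS, hm⟩)⟩
        · refine ⟨.inl m, (hmem _ _).2 hmS, (hmem _ _).2 ?_⟩
          show w2 ∈ D.bag m
          rw [hm]; exact hvm
    · exact absurd hadj completion_adj_inr_inr
  · -- support_connected
    rintro (w | q)
    · have hset : {i | Sum.inl w ∈ (Set.toFinite (newBagSet D uu vv S i)).toFinset}
          = (Sum.inl '' {t | w ∈ D.bag t}) ∪
            {i | ∃ q : QQ H, i = Sum.inr q ∧ (w = uu q ∨ (S q = ∅ ∧ w = vv q))} := by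
        apply Set.ext
        rintro (t | q)
        · rw [Set.mem_setOf_eq, hmem]
          constructor
          · intro h
            exact Or.inl ⟨t, h, rfl⟩
          · rintro (⟨t', ht', hEq⟩ | ⟨q, hEq, _⟩)
            · cases Sum.inl_injective hEq
              exact ht'
            · exact absurd hEq (by simp)
        · rw [Set.mem_setOf_eq, hmem]
          constructor
          · intro h
            exact Or.inr ⟨q, rfl, h⟩
          · rintro (⟨t', _, hEq⟩ | ⟨q', hEq, hq'⟩)
            · exact absurd hEq (by simp)
            · cases Sum.inr_injective hEq
              exact hq'
      rw [hset]
      apply induce_attach_connected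
      · exact extendTree_induce_image_connected (D.support_connected w)
      · rintro x ⟨q, rfl, hq⟩ -
        refine ⟨Sum.inl (anchor q), ⟨anchor q, ?_, rfl⟩, by simp⟩
        rcases hq with rfl | ⟨hS, rfl⟩
        · exact huA q
        · rcases hspec q with ⟨_, hv⟩ | ⟨hmem', _, _, _⟩
          · exact hv
          · rw [hS] at hmem'
            exact absurd hmem' (Set.notMem_empty _)
    · rcases Classical.em (S q = ∅) with hS | hS
      · have hset : {i | Sum.inr q ∈ (Set.toFinite (newBagSet D uu vv S i)).toFinset}
            = {Sum.inr q} := by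
          apply Set.ext
          rintro (t | p)
          · rw [Set.mem_setOf_eq, hmem]
            constructor
            · intro h
              rw [show ((Sum.inr q : V ⊕ QQ H) ∈ newBagSet D uu vv S (.inl t)) = (t ∈ S q) from rfl, hS] at h
              exact absurd h (Set.notMem_empty _)
            · intro h
              exact absurd h (by simp)
          · rw [Set.mem_setOf_eq, hmem]
            constructor
            · intro h
              rw [show ((Sum.inr q : V ⊕ QQ H) ∈ newBagSet D uu vv S (.inr p)) = (q = p) from rfl] at h
              rw [h]
              rfl
            · intro h
              cases Sum.inr_injective (Set.mem_singleton_iff.1 h)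
              exact rfl
        rw [hset]
        exact induce_singleton_connected _
      · rcases hspec q with ⟨hS', _⟩ | ⟨hmem', hconn, _, _⟩
        · exact absurd hS' hS
        · have hset : {i | Sum.inr q ∈ (Set.toFinite (newBagSet D uu vv S i)).toFinset}
              = (Sum.inl '' S q) ∪ {Sum.inr q} := by
            apply Set.ext
            rintro (t | p)
            · rw [Set.mem_setOf_eq, hmem]
              constructor
              · intro h
                exact Or.inl ⟨t, h, rfl⟩
              · rintro (⟨t', ht', hEq⟩ | hEq)
                · cases Sum.inl_injective hEq
                  exact ht'
                · exact absurd (Set.mem_singleton_iff.1 hEq) (by simp)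
            · rw [Set.mem_setOf_eq, hmem]
              constructor
              · intro h
                cases (show q = p from h)
                exact Or.inr rfl
              · rintro (⟨t', _, hEq⟩ | hEq)
                · exact absurd hEq (by simp)
                · cases Sum.inr_injective (Set.mem_singleton_iff.1 hEq)
                  exact rfl
          rw [hset]
          apply induce_attach_connected
          · exact extendTree_induce_image_connected hconn
          · rintro x hx -
            cases Set.mem_singleton_iff.1 hx
            exact ⟨Sum.inl (anchor q), ⟨anchor q, hmem', rfl⟩, by simp⟩
  · -- chromatic bound
    rintro (t | q)
    · apply chiNat_le_of_colorable
      have hset : (((Set.toFinite (newBagSet D uu vv S (Sum.inl t))).toFinset :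
            Finset (V ⊕ QQ H)) : Set (V ⊕ QQ H))
          = (Sum.inl '' ↑(D.bag t)) ∪ {y | ∃ p : QQ H, y = Sum.inr p ∧ t ∈ S p} := by
        rw [Set.Finite.coe_toFinset]
        apply Set.ext
        rintro (w | p)
        · constructor
          · intro h
            exact Or.inl ⟨w, h, rfl⟩
          · rintro (⟨w', hw', hEq⟩ | ⟨p, hEq, _⟩)
            · cases Sum.inl_injective hEq
              exact hw'
            · exact absurd hEq (by simp)
        · constructor
          · intro h
            exact Or.inr ⟨p, rfl, h⟩
          · rintro (⟨w', _, hEq⟩ | ⟨p', hEq, hp'⟩)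
            · exact absurd hEq (by simp)
            · cases Sum.inr_injective hEq
              exact hp'
      rw [hset]
      apply colorable_union_indep _ _ _ k hk
      · exact completion_induce_image_colorable (colorable_of_chiNat_le _ (hD t))
      · rintro x ⟨p, rfl, -⟩ y ⟨p', rfl, -⟩
        exact completion_adj_inr_inr
      · rintro x ⟨p, rfl, hpt⟩ -
        have hSne : ¬ (S p = ∅) := by
          intro h
          rw [h] at hpt
          exact Set.notMem_empty _ hpt
        rcases hspec p with ⟨hS', _⟩ | ⟨_, _, _, hnotboth⟩
        · exact absurd hS' hSne
        have hnb := hnotboth t hpt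
        refine ⟨if uu p ∈ D.bag t then Sum.inl (uu p) else Sum.inl (vv p), ?_⟩
        rintro z ⟨w, hw, rfl⟩ hadj
        have hm : w ∈ (p : QQ H).1 := completion_adj_inr_inl.1 hadj
        rw [hrep p, Sym2.mem_iff] at hm
        by_cases hu' : uu p ∈ D.bag t
        · rcases hm with rfl | rfl
          · rw [if_pos hu']
          · exact absurd ⟨hu', hw⟩ hnb
        · rcases hm with rfl | rfl
          · exact absurd hw hu'
          · rw [if_neg hu']
    · apply chiNat_le_of_colorable
      have h2 : ((completion H).induce
          (((Set.toFinite (newBagSet D uu vv S (Sum.inr q))).toFinset : Finset (V ⊕ QQ H)) :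
            Set (V ⊕ QQ H))).Colorable 2 := by
        refine ⟨Coloring.mk (fun y => if (y : V ⊕ QQ H).isLeft then (0 : Fin 2) else 1) ?_⟩
        intro a b hadj
        obtain ⟨y1, hy1⟩ := a
        obtain ⟨y2, hy2⟩ := b
        rw [Finset.mem_coe, hmem] at hy1 hy2
        have hG : (completion H).Adj y1 y2 := hadj
        cases y1 with
        | inl w1 =>
          cases y2 with
          | inl w2 =>
            intro _
            have hadj' : H.Adj w1 w2 := completion_adj_inl_inl.1 hG
            rcases (show w1 = uu q ∨ (S q = ∅ ∧ w1 = vv q) from hy1) with rfl | ⟨-, rfl⟩ <;>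
              rcases (show w2 = uu q ∨ (S q = ∅ ∧ w2 = vv q) from hy2) with rfl | ⟨-, rfl⟩
            · exact H.loopless.irrefl _ hadj'
            · exact hnadj q hadj'
            · exact hnadj q hadj'.symm
            · exact H.loopless.irrefl _ hadj'
          | inr p => simp
        | inr p =>
          cases y2 with
          | inl w2 => simp
          | inr p2 => exact absurd hG completion_adj_inr_inr
      exact h2.mono (by omega)


lemma restrict {V : Type} [Fintype V] {H : SimpleGraph V} (D : TreeDecomp (completion H)) {k : ℕ}
    (hD : ∀ t, chiNat ((completion H).induce ↑(D.bag t)) ≤ k) :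
    ∃ D' : TreeDecomp H, ∀ t, chiNat (H.induce ↑(D'.bag t)) ≤ k := by
  classical
  refine ⟨⟨D.ι, D.tree, D.isTree,
      fun t => (Set.toFinite {v : V | Sum.inl v ∈ D.bag t}).toFinset, ?_, ?_⟩, ?_⟩
  · intro u v huv
    obtain ⟨t, h1, h2⟩ := D.covers_edge (completion_adj_inl_inl.2 huv)
    exact ⟨t, (Set.Finite.mem_toFinset _).2 h1, (Set.Finite.mem_toFinset _).2 h2⟩
  · intro v
    have hset : {t | v ∈ (Set.toFinite {v : V | Sum.inl v ∈ D.bag t}).toFinset}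
        = {t | Sum.inl v ∈ D.bag t} := by
      ext t
      exact Set.Finite.mem_toFinset _
    rw [hset]
    exact D.support_connected (Sum.inl v)
  · intro t
    apply chiNat_le_of_colorable
    have hcol : ((completion H).induce ↑(D.bag t)).Colorable k := colorable_of_chiNat_le _ (hD t)
    refine colorable_of_hom ?_ hcol
    refine ⟨fun x => ⟨Sum.inl x.1, ?_⟩, fun {a b} h => ?_⟩
    · have := x.2
      rw [Finset.mem_coe, Set.Finite.mem_toFinset] at this
      exact this
    · exact completion_adj_inl_inl.2 h

lemma two_le_of_bound {V : Type} {H : SimpleGraph V} (hE : H.edgeSet.Nonempty)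
    {k : ℕ} (D : TreeDecomp H) (hD : ∀ t, chiNat (H.induce ↑(D.bag t)) ≤ k) : 2 ≤ k := by
  obtain ⟨u, v, huv⟩ : ∃ u v, H.Adj u v := by
    obtain ⟨e, he⟩ := hE
    induction e using Sym2.ind with
    | _ u v => exact ⟨u, v, he⟩
  obtain ⟨t, hu, hv⟩ := D.covers_edge huv
  by_contra hk
  push_neg at hk
  have hcol : (H.induce ↑(D.bag t)).Colorable 1 := by
    have h1 := colorable_of_chiNat_le _ (hD t)
    exact h1.mono (by omega)
  obtain ⟨c⟩ := hcol
  have hne := c.valid (show (H.induce ↑(D.bag t)).Adj ⟨u, hu⟩ ⟨v, hv⟩ from huv)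
  exact hne (Subsingleton.elim _ _)

noncomputable def trivialDecomp {W : Type} [Finite W] [Nonempty W] (G : SimpleGraph W) :
    TreeDecomp G where
  ι := Unit
  tree := ⊥
  isTree := ⟨⟨fun a b => by rw [Subsingleton.elim a b]⟩, isAcyclic_bot⟩
  bag := fun _ => (Set.toFinite (Set.univ : Set W)).toFinset
  covers_edge := fun {u v} _ =>
    ⟨(), (Set.Finite.mem_toFinset _).2 (Set.mem_univ u),
      (Set.Finite.mem_toFinset _).2 (Set.mem_univ v)⟩
  support_connected := by
    intro v
    haveI : Nonempty {t : Unit | v ∈ (Set.toFinite (Set.univ : Set W)).toFinset} :=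
      ⟨⟨(), (Set.Finite.mem_toFinset _).2 (Set.mem_univ v)⟩⟩
    exact ⟨fun a b => by rw [Subsingleton.elim a b]⟩

theorem stmt5 {V : Type} [Fintype V] (H : SimpleGraph V) (hE : H.edgeSet.Nonempty) :
    treeChi (completion H) = treeChi H := by
  classical
  have hneV : Nonempty V := by
    obtain ⟨e, he⟩ := hE
    induction e using Sym2.ind with
    | _ u v => exact ⟨u⟩
  haveI := hneV
  haveI : Nonempty (V ⊕ QQ H) := ⟨Sum.inl (Classical.arbitrary V)⟩
  have hSC : {k | ∃ D : TreeDecomp (completion H),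
      ∀ t, chiNat ((completion H).induce ↑(D.bag t)) ≤ k}.Nonempty := by
    exact ⟨chiNat ((completion H).induce ↑((trivialDecomp (completion H)).bag ())),
      trivialDecomp (completion H), fun t => by cases t; exact le_rfl⟩
  have hSH : {k | ∃ D : TreeDecomp H, ∀ t, chiNat (H.induce ↑(D.bag t)) ≤ k}.Nonempty := by
    exact ⟨chiNat (H.induce ↑((trivialDecomp H).bag ())), trivialDecomp H, fun t => by cases t; exact le_rfl⟩
  apply le_antisymm
  · obtain ⟨D, hD⟩ := Nat.sInf_mem hSH
    have hk2 : 2 ≤ sInf {k | ∃ D : TreeDecomp H, ∀ t, chiNat (H.induce ↑(D.bag t)) ≤ k} :=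
      two_le_of_bound hE D hD
    obtain ⟨D', hD'⟩ := construct D hk2 hD
    exact Nat.sInf_le ⟨D', hD'⟩
  · obtain ⟨D, hD⟩ := Nat.sInf_mem hSC
    obtain ⟨D', hD'⟩ := restrict D hD
    exact Nat.sInf_le ⟨D', hD'⟩
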